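/- Let H = ∑_{v∈V} P_v be a sum of orthogonal projections indexed by a finite graph (V,E), such that P_v and P_w commute whenever {v,w} is not an edge, and each vertex has degree at most d. If ε := max over edges {v,w} of ‖(1-P_v)(1-P_w) - (1-P_v)∧(1-P_w)‖ satisfies ε < 1/d, then H² ≥ (1 - dε) H, so the spectral gap of H above 0 is at least 1 - dε. -/

import Mathlib

set_option maxHeartbeats 1000000
open scoped InnerProductSpace
open RCLike ContinuousLinearMap

/-- The orthogonal projection `E ∧ F` onto `ran E ∩ ran F`. -/
noncomputable def projWedge {H : Type*} [NormedAddCommGroup H] [InnerProductSpace ℂ H]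
    [FiniteDimensional ℂ H] (E F : H →L[ℂ] H) : H →L[ℂ] H :=
  (LinearMap.range (E : H →ₗ[ℂ] H) ⊓ LinearMap.range (F : H →ₗ[ℂ] H)).subtypeL ∘L
    Submodule.orthogonalProjectionOnto (LinearMap.range (E : H →ₗ[ℂ] H) ⊓ LinearMap.range (F : H →ₗ[ℂ] H))

section aux
variable {H : Type*} [NormedAddCommGroup H] [InnerProductSpace ℂ H] [FiniteDimensional ℂ H]

lemma projWedge_isSelfAdjoint (E F : H →L[ℂ] H) : IsSelfAdjoint (projWedge E F) :=
  isSelfAdjoint_starProjection _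

lemma projWedge_mem (E F : H →L[ℂ] H) (x : H) :
    projWedge E F x ∈ LinearMap.range (E : H →ₗ[ℂ] H) ⊓ LinearMap.range (F : H →ₗ[ℂ] H) :=
  (Submodule.orthogonalProjectionOnto _ x).2

lemma projWedge_idem (E F : H →L[ℂ] H) (x : H) :
    projWedge E F (projWedge E F x) = projWedge E F x := by
  show Submodule.starProjection _ (projWedge E F x) = _
  rw [Submodule.starProjection_eq_self_iff.2 (projWedge_mem E F x)]

lemma apply_projWedge_left (E F : H →L[ℂ] H) (hE : E ∘L E = E) (x : H) :
    E (projWedge E F x) = projWedge E F x := by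
  obtain ⟨z, hz⟩ := (projWedge_mem E F x).1
  rw [← hz, ContinuousLinearMap.coe_coe, ← ContinuousLinearMap.comp_apply, hE]

lemma apply_projWedge_right (E F : H →L[ℂ] H) (hF : F ∘L F = F) (x : H) :
    F (projWedge E F x) = projWedge E F x := by
  obtain ⟨z, hz⟩ := (projWedge_mem E F x).2
  rw [← hz, ContinuousLinearMap.coe_coe, ← ContinuousLinearMap.comp_apply, hF]

lemma comp_projWedge_left (E F : H →L[ℂ] H) (hEsa : IsSelfAdjoint E) (hE : E ∘L E = E) :
    projWedge E F ∘L E = projWedge E F := by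
  have h1 : E ∘L projWedge E F = projWedge E F := by
    ext x; exact apply_projWedge_left E F hE x
  have h2 := congrArg star h1
  rw [show E ∘L projWedge E F = E * projWedge E F from rfl, star_mul, hEsa.star_eq,
    (projWedge_isSelfAdjoint E F).star_eq] at h2
  exact h2

lemma comp_projWedge_right (E F : H →L[ℂ] H) (hFsa : IsSelfAdjoint F) (hF : F ∘L F = F) :
    projWedge E F ∘L F = projWedge E F := by
  have h1 : F ∘L projWedge E F = projWedge E F := by
    ext x; exact apply_projWedge_right E F hF x
  have h2 := congrArg star h1
  rw [show F ∘L projWedge E F = F * projWedge E F from rfl, star_mul, hFsa.star_eq,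
    (projWedge_isSelfAdjoint E F).star_eq] at h2
  exact h2
end aux

private lemma final_real (ε Y s r : ℝ) (hε0 : 0 ≤ ε) (hε1 : ε ≤ 1) (hs : 0 ≤ s)
    (hsr : 0 ≤ s + 2*r)
    (hkey : s^2 ≤ Y^2 * (s + 2*r)) (hr1 : r ≤ ε/2 * s) (hr2 : -(ε/2 * s) ≤ r) :
    (1 + ε/2) * s ≤ (1 + ε) * Y^2 + r := by
  rcases eq_or_lt_of_le hsr with h|h
  · have hs0 : s = 0 := by nlinarith
    have hr0 : r = 0 := by nlinarith
    rw [hs0, hr0]; nlinarith [sq_nonneg Y]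
  · have hfac : 0 ≤ (s/2 - r) * (ε*s/2 - r) :=
      mul_nonneg (by nlinarith) (by linarith)
    nlinarith [hkey, hfac, mul_pos h h]

private lemma sq_le_aux (s Y t : ℝ) (h4 : s ≤ Y * t) (hs : 0 ≤ s) (hY : 0 ≤ Y) (ht : 0 ≤ t) :
    s^2 ≤ Y^2 * t^2 := by nlinarith [mul_le_mul h4 h4 hs (mul_nonneg hY ht)]

private lemma inner_expand {H : Type*} [NormedAddCommGroup H] [InnerProductSpace ℂ H]
    (y a b : H) : RCLike.re ⟪y - a, y - b⟫_ℂ =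
      RCLike.re ⟪y, y⟫_ℂ - RCLike.re ⟪y, b⟫_ℂ - RCLike.re ⟪a, y⟫_ℂ + RCLike.re ⟪a, b⟫_ℂ := by
  simp only [inner_sub_left, inner_sub_right, map_sub]
  ring

private lemma abs_to_half (ε α β r : ℝ) (hε0 : 0 ≤ ε) (h : |r| ≤ ε * (α * β)) :
    |r| ≤ ε/2 * (α^2 + β^2) := by
  nlinarith [mul_nonneg hε0 (sq_nonneg (α - β)), abs_nonneg r]

section edge
variable {H : Type*} [NormedAddCommGroup H] [InnerProductSpace ℂ H] [FiniteDimensional ℂ H]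

/-- Key two-projection estimate. -/
lemma edge_key (Pv Pw : H →L[ℂ] H) (hv : IsSelfAdjoint Pv) (hv2 : Pv ∘L Pv = Pv)
    (hw : IsSelfAdjoint Pw) (hw2 : Pw ∘L Pw = Pw) (ε : ℝ) (hε0 : 0 ≤ ε) (hε1 : ε ≤ 1)
    (hn : ‖(1 - Pv) ∘L (1 - Pw) - projWedge (1 - Pv) (1 - Pw)‖ ≤ ε) (x : H) :
    -(ε/2) * (‖Pv x‖^2 + ‖Pw x‖^2) ≤ re ⟪Pv x, Pw x⟫_ℂ := by
  set E : H →L[ℂ] H := 1 - Pv with hEdef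
  set F : H →L[ℂ] H := 1 - Pw with hFdef
  have hEsa : IsSelfAdjoint E := (IsSelfAdjoint.one (H →L[ℂ] H)).sub hv
  have hFsa : IsSelfAdjoint F := (IsSelfAdjoint.one (H →L[ℂ] H)).sub hw
  have hE2 : E ∘L E = E := by
    show E * E = E
    have hv2' : Pv * Pv = Pv := hv2
    calc E * E = 1 - Pv - Pv + Pv * Pv := by rw [hEdef]; noncomm_ring
    _ = E := by rw [hv2', hEdef]; abel
  have hF2 : F ∘L F = F := by
    show F * F = F
    have hw2' : Pw * Pw = Pw := hw2
    calc F * F = 1 - Pw - Pw + Pw * Pw := by rw [hFdef]; noncomm_ring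
    _ = F := by rw [hw2', hFdef]; abel
  set W : H →L[ℂ] H := projWedge E F with hWdef
  have hWsa : IsSelfAdjoint W := projWedge_isSelfAdjoint E F
  have hEW : E * W = W := by ext z; exact apply_projWedge_left E F hE2 z
  have hFW : F * W = W := by ext z; exact apply_projWedge_right E F hF2 z
  have hWE : W * E = W := comp_projWedge_left E F hEsa hE2
  have hWF : W * F = W := comp_projWedge_right E F hFsa hF2
  have hWW : W * W = W := by ext z; exact projWedge_idem E F z
  set A : H →L[ℂ] H := E - W with hAdef
  set B : H →L[ℂ] H := F - W with hBdef
  have hAsa : IsSelfAdjoint A := hEsa.sub hWsa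
  have hBsa : IsSelfAdjoint B := hFsa.sub hWsa
  have hE2' : E * E = E := hE2
  have hF2' : F * F = F := hF2
  have hA2 : A ∘L A = A := by
    show A * A = A
    calc A * A = E * E - E * W - W * E + W * W := by rw [hAdef]; noncomm_ring
    _ = A := by rw [hE2', hEW, hWE, hWW, hAdef]; show E - W - W + W = E - W; abel
  have hB2 : B ∘L B = B := by
    show B * B = B
    calc B * B = F * F - F * W - W * F + W * W := by rw [hBdef]; noncomm_ring
    _ = B := by rw [hF2', hFW, hWF, hWW, hBdef]; show F - W - W + W = F - W; abel
  have hAB : A ∘L B = E ∘L F - W := by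
    show A * B = E * F - W
    calc A * B = E * F - E * W - W * F + W * W := by rw [hAdef, hBdef]; noncomm_ring
    _ = E * F - W := by rw [hEW, hWF, hWW]; abel
  have hABnorm : ‖A ∘L B‖ ≤ ε := by rw [hAB]; exact hn
  set y : H := x - W x with hydef
  have hWy : W y = 0 := by
    rw [hydef, map_sub, ← ContinuousLinearMap.comp_apply]
    rw [show W ∘L W = W from hWW, sub_self]
  have hAy : A y = E x - W x := by
    rw [hAdef, ContinuousLinearMap.sub_apply, hWy, sub_zero, hydef, map_sub,
      ← ContinuousLinearMap.comp_apply, show E ∘L W = W from hEW]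
  have hBy : B y = F x - W x := by
    rw [hBdef, ContinuousLinearMap.sub_apply, hWy, sub_zero, hydef, map_sub,
      ← ContinuousLinearMap.comp_apply, show F ∘L W = W from hFW]
  have hPvx : Pv x = y - A y := by
    rw [hAy, hydef]
    have hEx : E x = x - Pv x := by rw [hEdef]; simp
    rw [hEx]; abel
  have hPwx : Pw x = y - B y := by
    rw [hBy, hydef]
    have hFx : F x = x - Pw x := by rw [hFdef]; simp
    rw [hFx]; abel
  set a : H := A y with hadef
  set b : H := B y with hbdef
  have ha' : A a = a := by rw [hadef, ← ContinuousLinearMap.comp_apply, hA2]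
  have hb' : B b = b := by rw [hbdef, ← ContinuousLinearMap.comp_apply, hB2]
  -- inner product bound
  have habs : ‖⟪a, b⟫_ℂ‖ ≤ ε * (‖a‖ * ‖b‖) := by
    have hain : ⟪a, b⟫_ℂ = ⟪a, (A ∘L B) b⟫_ℂ := by
      calc ⟪a, b⟫_ℂ = ⟪A a, B b⟫_ℂ := by rw [ha', hb']
      _ = ⟪a, A (B b)⟫_ℂ := hAsa.isSymmetric a (B b)
      _ = ⟪a, (A ∘L B) b⟫_ℂ := by rw [ContinuousLinearMap.comp_apply]
    rw [hain]
    calc ‖⟪a, (A ∘L B) b⟫_ℂ‖ ≤ ‖a‖ * ‖(A ∘L B) b‖ := norm_inner_le_norm _ _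
    _ ≤ ‖a‖ * (‖A ∘L B‖ * ‖b‖) :=
        mul_le_mul_of_nonneg_left ((A ∘L B).le_opNorm b) (norm_nonneg a)
    _ ≤ ε * (‖a‖ * ‖b‖) := by
        nlinarith [norm_nonneg a, norm_nonneg b, opNorm_nonneg (A ∘L B),
          mul_le_mul_of_nonneg_right hABnorm (norm_nonneg b)]
  have hra : re ⟪y, a⟫_ℂ = ‖a‖^2 := by
    calc re ⟪y, a⟫_ℂ = re ⟪y, A a⟫_ℂ := by rw [ha']
    _ = re ⟪A y, a⟫_ℂ := congrArg re (hAsa.isSymmetric y a).symm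
    _ = ‖a‖^2 := by rw [← hadef, inner_self_eq_norm_sq]
  have hrb : re ⟪y, b⟫_ℂ = ‖b‖^2 := by
    calc re ⟪y, b⟫_ℂ = re ⟪y, B b⟫_ℂ := by rw [hb']
    _ = re ⟪B y, b⟫_ℂ := congrArg re (hBsa.isSymmetric y b).symm
    _ = ‖b‖^2 := by rw [← hbdef, inner_self_eq_norm_sq]
  have habs2 : |re ⟪a, b⟫_ℂ| ≤ ε/2 * (‖a‖^2 + ‖b‖^2) :=
    abs_to_half ε ‖a‖ ‖b‖ _ hε0 (le_trans (abs_re_le_norm _) habs)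
  -- ⟪y, a+b⟫ Cauchy–Schwarz
  have h4 : ‖a‖^2 + ‖b‖^2 ≤ ‖y‖ * ‖a + b‖ := by
    have h5 : re ⟪y, a + b⟫_ℂ = ‖a‖^2 + ‖b‖^2 := by
      rw [inner_add_right, map_add, hra, hrb]
    rw [← h5]; exact re_inner_le_norm y (a + b)
  have ht2 : ‖a + b‖^2 = (‖a‖^2 + ‖b‖^2) + 2 * re ⟪a, b⟫_ℂ := by
    rw [norm_add_sq (𝕜 := ℂ)]; ring
  have hkey : (‖a‖^2 + ‖b‖^2)^2 ≤ ‖y‖^2 * ((‖a‖^2 + ‖b‖^2) + 2 * re ⟪a, b⟫_ℂ) := by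
    rw [← ht2]
    have := sq_le_aux (‖a‖^2 + ‖b‖^2) ‖y‖ ‖a + b‖ h4 (by positivity) (norm_nonneg y)
      (norm_nonneg (a + b))
    calc (‖a‖^2 + ‖b‖^2)^2 ≤ ‖y‖^2 * ‖a + b‖^2 := this
    _ = ‖y‖^2 * ‖a + b‖^2 := rfl
  have hsr : 0 ≤ (‖a‖^2 + ‖b‖^2) + 2 * re ⟪a, b⟫_ℂ := by rw [← ht2]; positivity
  have hfin := final_real ε ‖y‖ (‖a‖^2 + ‖b‖^2) (re ⟪a, b⟫_ℂ) hε0 hε1 (by positivity)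
    hsr hkey (le_of_abs_le habs2) (neg_le_of_abs_le habs2)
  -- norms of Pv x, Pw x and expansion
  have hnv : ‖Pv x‖^2 = ‖y‖^2 - ‖a‖^2 := by
    rw [hPvx, norm_sub_sq (𝕜 := ℂ), hra]; ring
  have hnw : ‖Pw x‖^2 = ‖y‖^2 - ‖b‖^2 := by
    rw [hPwx, norm_sub_sq (𝕜 := ℂ), hrb]; ring
  have hexp : re ⟪Pv x, Pw x⟫_ℂ = ‖y‖^2 - ‖a‖^2 - ‖b‖^2 + re ⟪a, b⟫_ℂ := by
    rw [hPvx, hPwx, inner_expand, inner_self_eq_norm_sq, hrb,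
      show re ⟪a, y⟫_ℂ = ‖a‖^2 by rw [inner_re_symm, hra]]
    ring
  rw [hexp, hnv, hnw]
  linarith [hfin]
end edge

section nonedge
variable {H : Type*} [NormedAddCommGroup H] [InnerProductSpace ℂ H] [FiniteDimensional ℂ H]

lemma nonedge_key (Pv Pw : H →L[ℂ] H) (hv : IsSelfAdjoint Pv) (hv2 : Pv ∘L Pv = Pv)
    (hw : IsSelfAdjoint Pw) (hw2 : Pw ∘L Pw = Pw) (hc : Pv * Pw = Pw * Pv) (x : H) :
    0 ≤ re ⟪Pv x, Pw x⟫_ℂ := by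
  set R : H →L[ℂ] H := Pv ∘L Pw with hRdef
  have hRsa : IsSelfAdjoint R := by
    rw [IsSelfAdjoint, show R = Pv * Pw from rfl, star_mul, hv.star_eq, hw.star_eq, hc]
  have hR2 : R ∘L R = R := by
    show R * R = R
    have hv2' : Pv * Pv = Pv := hv2
    have hw2' : Pw * Pw = Pw := hw2
    calc R * R = Pv * (Pw * Pv) * Pw := by rw [hRdef]; noncomm_ring
    _ = (Pv * Pv) * (Pw * Pw) := by rw [← hc]; noncomm_ring
    _ = R := by rw [hv2', hw2']; rfl
  have h1 : ⟪Pv x, Pw x⟫_ℂ = ⟪x, R x⟫_ℂ := hv.isSymmetric x (Pw x)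
  have eR : R (R x) = R x := ContinuousLinearMap.ext_iff.1 hR2 x
  have h2 : ⟪x, R x⟫_ℂ = ⟪R x, R x⟫_ℂ := by
    calc ⟪x, R x⟫_ℂ = ⟪x, R (R x)⟫_ℂ := by rw [eR]
    _ = ⟪R x, R x⟫_ℂ := (hRsa.isSymmetric x (R x)).symm
  rw [h1, h2, inner_self_eq_norm_sq]
  positivity
end nonedge

/-- For `H = ∑_v P_v` a sum of orthogonal projections indexed by a graph of maximum
degree `d`, with `P_v`, `P_w` commuting on non-edges, if the quantity `ε` bounding the
norms `‖(1-P_v)(1-P_w) - (1-P_v)∧(1-P_w)‖` over edges satisfies `ε < 1/d`, then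
`H² ≥ (1 - dε) H` and every nonzero eigenvalue of `H` is at least `1 - dε`. -/
theorem stmt2 {H : Type*} [NormedAddCommGroup H] [InnerProductSpace ℂ H]
    [FiniteDimensional ℂ H] {V : Type*} [Fintype V] [DecidableEq V]
    (G : SimpleGraph V) [DecidableRel G.Adj]
    (d : ℕ) (hd : 0 < d) (hdeg : ∀ v, G.degree v ≤ d)
    (P : V → (H →L[ℂ] H))
    (hP : ∀ v, IsSelfAdjoint (P v) ∧ (P v) ∘L (P v) = P v)
    (hcomm : ∀ v w, v ≠ w → ¬ G.Adj v w → Commute (P v) (P w))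
    (ε : ℝ) (hε0 : 0 ≤ ε)
    (hε : ∀ v w, G.Adj v w →
      ‖(1 - P v) ∘L (1 - P w) - projWedge (1 - P v) (1 - P w)‖ ≤ ε)
    (hεd : ε < 1 / (d : ℝ)) :
    ((∑ v, P v) ∘L (∑ v, P v) - ((1 - (d : ℝ) * ε) • ∑ v, P v)).IsPositive ∧
      ∀ c : ℂ, Module.End.HasEigenvalue ((∑ v, P v : H →L[ℂ] H) : H →ₗ[ℂ] H) c →
        c ≠ 0 → 1 - (d : ℝ) * ε ≤ c.re := by
  have hd1 : (1:ℝ) ≤ d := by exact_mod_cast hd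
  have hε1 : ε ≤ 1 := le_of_lt (lt_of_lt_of_le hεd (by
    rw [div_le_one (by positivity)]; exact hd1))
  set g : ℝ := 1 - (d : ℝ) * ε with hgdef
  set H0 : H →L[ℂ] H := ∑ v, P v with hH0def
  have hsa : IsSelfAdjoint H0 := by
    rw [hH0def, isSelfAdjoint_iff, star_sum]
    exact Finset.sum_congr rfl fun v _ => (hP v).1.star_eq
  -- norms of projections applied
  have hf : ∀ (v : V) (x : H), re ⟪P v x, x⟫_ℂ = ‖P v x‖^2 := by
    intro v x
    have e1 : P v (P v x) = P v x := ContinuousLinearMap.ext_iff.1 (hP v).2 x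
    calc re ⟪P v x, x⟫_ℂ = re ⟪P v (P v x), x⟫_ℂ := by rw [e1]
    _ = re ⟪P v x, P v x⟫_ℂ := congrArg re ((hP v).1.isSymmetric (P v x) x)
    _ = ‖P v x‖^2 := inner_self_eq_norm_sq _
  -- decomposition of the quadratic form
  have hTdec : ∀ x : H, re ⟪(H0 ∘L H0 - g • H0) x, x⟫_ℂ
      = re ⟪H0 (H0 x), x⟫_ℂ - g * re ⟪H0 x, x⟫_ℂ := by
    intro x
    have hTx : (H0 ∘L H0 - g • H0) x = H0 (H0 x) - g • (H0 x) := rfl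
    rw [hTx, inner_sub_left, map_sub, real_smul_eq_coe_smul (K := ℂ) g (H0 x),
      inner_smul_real_left, RCLike.smul_re]
  have hsum1 : ∀ x : H, re ⟪H0 x, x⟫_ℂ = ∑ v, ‖P v x‖^2 := by
    intro x
    rw [hH0def, ContinuousLinearMap.sum_apply, sum_inner, map_sum]
    exact Finset.sum_congr rfl fun v _ => hf v x
  have hpos : ∀ x : H, 0 ≤ re ⟪(H0 ∘L H0 - g • H0) x, x⟫_ℂ := by
    intro x
    set f : V → ℝ := fun v => ‖P v x‖^2 with hfdef
    have hf0 : ∀ v, 0 ≤ f v := fun v => sq_nonneg _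
    have hsum2 : re ⟪H0 (H0 x), x⟫_ℂ = ∑ v, ∑ w, re ⟪P v x, P w x⟫_ℂ := by
      have hsym : ⟪H0 (H0 x), x⟫_ℂ = ⟪H0 x, H0 x⟫_ℂ := hsa.isSymmetric (H0 x) x
      rw [hsym]
      conv_lhs => rw [hH0def, ContinuousLinearMap.sum_apply]
      rw [sum_inner, map_sum]
      refine Finset.sum_congr rfl fun v _ => ?_
      rw [inner_sum, map_sum]
    have hpair : ∀ v w, (if v = w then f v else if G.Adj v w then -(ε/2) * (f v + f w) else 0)
        ≤ re ⟪P v x, P w x⟫_ℂ := by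
      intro v w
      by_cases hvw : v = w
      · subst hvw
        simp only [if_pos rfl]
        exact le_of_eq (inner_self_eq_norm_sq _).symm
      · rw [if_neg hvw]
        by_cases hadj : G.Adj v w
        · rw [if_pos hadj]
          exact edge_key (P v) (P w) (hP v).1 (hP v).2 (hP w).1 (hP w).2 ε hε0 hε1
            (hε v w hadj) x
        · rw [if_neg hadj]
          exact nonedge_key (P v) (P w) (hP v).1 (hP v).2 (hP w).1 (hP w).2
            (hcomm v w hvw hadj) x
    have hdouble : ∑ v, ∑ w, (if v = w then f v else if G.Adj v w then -(ε/2) * (f v + f w) else 0)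
        ≤ ∑ v, ∑ w, re ⟪P v x, P w x⟫_ℂ :=
      Finset.sum_le_sum fun v _ => Finset.sum_le_sum fun w _ => hpair v w
    set D : ℝ := ∑ v, (G.degree v : ℝ) * f v with hDdef
    have hc2 : ∀ (v : V) (c : ℝ), ∑ w, (if G.Adj v w then c else 0) = (G.degree v : ℝ) * c := by
      intro v c
      rw [← Finset.sum_filter]
      rw [Finset.sum_const, nsmul_eq_mul]
      congr 2
      rw [SimpleGraph.degree, SimpleGraph.neighborFinset_eq_filter]
    have hLHS : ∑ v, ∑ w, (if v = w then f v else if G.Adj v w then -(ε/2) * (f v + f w) else 0)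
        = (∑ v, f v) - (ε/2) * (D + D) := by
      have hsplit : ∀ v w : V,
          (if v = w then f v else if G.Adj v w then -(ε/2) * (f v + f w) else 0)
          = (if v = w then f v else 0) + ((if G.Adj v w then -(ε/2) * f v else 0)
              + (if G.Adj v w then -(ε/2) * f w else 0)) := by
        intro v w
        by_cases hvw : v = w
        · subst hvw; simp [SimpleGraph.irrefl]
        · by_cases hadj : G.Adj v w <;> simp [hvw, hadj] <;> ring
      simp only [hsplit, Finset.sum_add_distrib]
      have c1 : ∑ v, ∑ w, (if v = w then f v else 0) = ∑ v, f v := by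
        refine Finset.sum_congr rfl fun v _ => ?_
        simp [Finset.sum_ite_eq]
      have c2 : ∑ v, ∑ w, (if G.Adj v w then -(ε/2) * f v else 0) = -(ε/2) * D := by
        rw [hDdef, Finset.mul_sum]
        refine Finset.sum_congr rfl fun v _ => ?_
        rw [hc2 v (-(ε/2) * f v)]; ring
      have c3 : ∑ v, ∑ w, (if G.Adj v w then -(ε/2) * f w else 0) = -(ε/2) * D := by
        rw [Finset.sum_comm, hDdef, Finset.mul_sum]
        refine Finset.sum_congr rfl fun w _ => ?_
        have : ∀ v, (if G.Adj v w then -(ε/2) * f w else 0)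
            = (if G.Adj w v then -(ε/2) * f w else 0) := by
          intro v; exact if_congr (G.adj_comm v w) rfl rfl
        rw [show (∑ v, if G.Adj v w then -(ε/2) * f w else 0)
            = ∑ v, (if G.Adj w v then -(ε/2) * f w else 0) from
          Finset.sum_congr rfl fun v _ => this v, hc2 w (-(ε/2) * f w)]
        ring
      rw [c1, c2, c3]; ring
    have hD : D ≤ (d : ℝ) * ∑ v, f v := by
      rw [Finset.mul_sum]
      refine Finset.sum_le_sum fun v _ => ?_
      exact mul_le_mul_of_nonneg_right (by exact_mod_cast hdeg v) (hf0 v)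
    have hF0 : 0 ≤ ∑ v, f v := Finset.sum_nonneg fun v _ => hf0 v
    have hεD : ε * D ≤ ε * ((d : ℝ) * ∑ v, f v) := mul_le_mul_of_nonneg_left hD hε0
    rw [hTdec x, hsum1 x]
    rw [hsum2]
    have := le_trans (le_of_eq hLHS.symm) hdouble
    show (0:ℝ) ≤ ∑ v, ∑ w, re ⟪P v x, P w x⟫_ℂ - g * ∑ v, f v
    have hg : g = 1 - (d : ℝ) * ε := hgdef
    nlinarith [this, hεD]
  refine ⟨⟨?_, fun x => hpos x⟩, ?_⟩
  · have h1 : IsSelfAdjoint (H0 ∘L H0) := by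
      rw [isSelfAdjoint_iff, show H0 ∘L H0 = H0 * H0 from rfl, star_mul, hsa.star_eq]
    have h2 : IsSelfAdjoint (g • H0) := by
      rw [isSelfAdjoint_iff, star_smul, star_trivial, hsa.star_eq]
    exact (h1.sub h2).isSymmetric
  · intro c hc hc0
    obtain ⟨x, hx⟩ := hc.exists_hasEigenvector
    have hxne : x ≠ 0 := hx.right
    have hxs : H0 x = c • x := hx.apply_eq_smul
    have hconj : (starRingEnd ℂ) c = c := hsa.isSymmetric.conj_eigenvalue_eq_self hc
    have him : c.im = 0 := by
      have := congrArg Complex.im hconj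
      simp only [Complex.conj_im] at this
      linarith
    have hren : c.re ≠ 0 := by
      intro h
      exact hc0 (Complex.ext h him)
    have hn2 : (0:ℝ) < ‖x‖^2 := pow_pos (norm_pos_iff.2 hxne) 2
    have e1 : re ⟪H0 x, x⟫_ℂ = c.re * ‖x‖^2 := by
      rw [hxs, inner_smul_left, inner_self_eq_norm_sq_to_K, re_to_complex, Complex.mul_re,
        Complex.conj_re, Complex.conj_im]
      simp [him]
      left; norm_cast
    have hxs2 : H0 (H0 x) = (c * c) • x := by
      rw [hxs, map_smul, hxs, smul_smul]
    have e2 : re ⟪H0 (H0 x), x⟫_ℂ = (c.re * c.re) * ‖x‖^2 := by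
      rw [hxs2, inner_smul_left, inner_self_eq_norm_sq_to_K, re_to_complex, Complex.mul_re]
      simp [Complex.mul_re, Complex.mul_im, him]
      left; norm_cast
    have hp := hpos x
    rw [hTdec x, e1, e2] at hp
    have hre0 : 0 ≤ c.re := by
      have h0 : 0 ≤ re ⟪H0 x, x⟫_ℂ := by
        rw [hsum1 x]
        exact Finset.sum_nonneg fun v _ => sq_nonneg _
      rw [e1] at h0
      nlinarith
    have hcre : 0 < c.re := lt_of_le_of_ne hre0 (Ne.symm hren)
    have hq : g * c.re ≤ c.re * c.re := by nlinarith [hp, hn2]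
    nlinarith [hq, hcre]
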